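/- Let Φ = {ψ₁, …, ψₙ} be a finite set of satisfiable propositional formulas, and let N := Σᵢ ⟨ψᵢ⟩ be the total number of variable occurrences. Then there exists a partition Φ = Φ₁ ∪ … ∪ Φ_m into nonempty blocks such that m · log₂ m ≤ N and, for every j, the conjunction of all formulas in Φⱼ is satisfiable. -/

import Mathlib

/-- Propositional formulas over countably many variables. -/
inductive PropForm where
  | var : ℕ → PropForm
  | tru : PropForm
  | fls : PropForm
  | neg : PropForm → PropForm
  | conj : PropForm → PropForm → PropForm
  | disj : PropForm → PropForm → PropForm

def PropForm.eval (θ : ℕ → Bool) : PropForm → Bool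
  | .var v => θ v
  | .tru => true
  | .fls => false
  | .neg φ => !(φ.eval θ)
  | .conj φ ψ => φ.eval θ && ψ.eval θ
  | .disj φ ψ => φ.eval θ || ψ.eval θ

/-- `⟨ψ⟩`: the number of occurrences of variables in `ψ`. -/
def PropForm.varCount : PropForm → ℕ
  | .var _ => 1
  | .tru => 0
  | .fls => 0
  | .neg φ => φ.varCount
  | .conj φ ψ => φ.varCount + ψ.varCount
  | .disj φ ψ => φ.varCount + ψ.varCount

/-- Let `Φ = {ψ₁, …, ψₙ}` be satisfiable propositional formulas with `N` total variable
occurrences.  Then `Φ` can be partitioned into `m` (nonempty) blocks — given by a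
surjection `P : Fin n → Fin m` — such that `m · log₂ m ≤ N` and the conjunction of the
formulas in each block is satisfiable. -/
def PropForm.vars : PropForm → Finset ℕ
  | .var v => {v}
  | .tru => ∅
  | .fls => ∅
  | .neg φ => φ.vars
  | .conj φ ψ => φ.vars ∪ ψ.vars
  | .disj φ ψ => φ.vars ∪ ψ.vars

lemma PropForm.card_vars_le_varCount (φ : PropForm) : φ.vars.card ≤ φ.varCount := by
  induction φ with
  | var v => simp [vars, varCount]
  | tru => simp [vars, varCount]
  | fls => simp [vars, varCount]
  | neg φ ih => simpa [vars, varCount] using ih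
  | conj φ ψ ih1 ih2 =>
    calc (φ.vars ∪ ψ.vars).card ≤ φ.vars.card + ψ.vars.card := Finset.card_union_le _ _
    _ ≤ _ := Nat.add_le_add ih1 ih2
  | disj φ ψ ih1 ih2 =>
    calc (φ.vars ∪ ψ.vars).card ≤ φ.vars.card + ψ.vars.card := Finset.card_union_le _ _
    _ ≤ _ := Nat.add_le_add ih1 ih2

lemma PropForm.eval_congr {θ θ' : ℕ → Bool} (φ : PropForm)
    (h : ∀ v ∈ φ.vars, θ v = θ' v) : φ.eval θ = φ.eval θ' := by
  induction φ with
  | var v => exact h v (by simp [vars])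
  | tru => rfl
  | fls => rfl
  | neg φ ih => simp [eval, ih (fun v hv => h v hv)]
  | conj φ ψ ih1 ih2 =>
    simp [eval, ih1 (fun v hv => h v (by simp [vars, hv])),
      ih2 (fun v hv => h v (by simp [vars, hv]))]
  | disj φ ψ ih1 ih2 =>
    simp [eval, ih1 (fun v hv => h v (by simp [vars, hv])),
      ih2 (fun v hv => h v (by simp [vars, hv]))]

/-- The key counting fact: if the blocks of `P` are each jointly satisfiable but
pairwise jointly unsatisfiable, then `m · log₂ m ≤ N`. -/
lemma key_count (n m : ℕ) (ψ : Fin n → PropForm) (P : Fin n → Fin m)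
    (hsat : ∀ j, ∃ θ, ∀ i, P i = j → (ψ i).eval θ = true)
    (hcon : ∀ j j' : Fin m, j ≠ j' →
      ¬ ∃ θ : ℕ → Bool, ∀ i, (P i = j ∨ P i = j') → (ψ i).eval θ = true) :
    (m : ℝ) * Real.logb 2 m ≤ ((∑ i, (ψ i).varCount : ℕ) : ℝ) := by
  classical
  rcases Nat.eq_zero_or_pos m with hm | hm
  · subst hm; simp; positivity
  choose θb hθb using hsat
  set V : Finset ℕ := Finset.univ.biUnion (fun i => (ψ i).vars) with hV
  set W : Fin m → Finset ℕ :=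
    fun j => (Finset.univ.filter (fun i => P i = j)).biUnion (fun i => (ψ i).vars) with hW
  have hWV : ∀ j, W j ⊆ V := by
    intro j
    refine Finset.biUnion_subset.2 fun i _ => ?_
    exact Finset.subset_biUnion_of_mem (fun i => (ψ i).vars) (Finset.mem_univ i)
  set k : Fin m → ℕ := fun j => (W j).card with hk
  have hkV : ∀ j, k j ≤ V.card := fun j => Finset.card_le_card (hWV j)
  -- the extension of a partial assignment on V
  set ext : (↥V → Bool) → ℕ → Bool :=
    fun f v => if h : v ∈ V then f ⟨v, h⟩ else false with hext
  set A : Fin m → Finset (↥V → Bool) :=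
    fun j => Finset.univ.filter (fun f => ∀ i, P i = j → (ψ i).eval (ext f) = true) with hA
  -- each A j is large
  have hcard : ∀ j, 2 ^ (V.card - k j) ≤ (A j).card := by
    intro j
    set F : (↥(V \ W j) → Bool) → (↥V → Bool) :=
      fun g v => if h : (v : ℕ) ∈ W j then θb j v
        else g ⟨v, Finset.mem_sdiff.mpr ⟨v.2, h⟩⟩ with hF
    have hmem : ∀ g, F g ∈ A j := by
      intro g
      simp only [hA, Finset.mem_filter, Finset.mem_univ, true_and]
      intro i hi
      have : (ψ i).eval (ext (F g)) = (ψ i).eval (θb j) := by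
        apply PropForm.eval_congr
        intro v hv
        have hvW : v ∈ W j := by
          refine Finset.mem_biUnion.2 ⟨i, ?_, hv⟩
          simp [hi]
        have hvV : v ∈ V := hWV j hvW
        simp [hext, hvV, hF, hvW]
      rw [this]; exact hθb j i hi
    have hinj : Set.InjOn F ↑(Finset.univ : Finset (↥(V \ W j) → Bool)) := by
      intro g₁ _ g₂ _ hg
      funext x
      have hx : (x : ℕ) ∈ V := (Finset.mem_sdiff.mp x.2).1
      have hx' : (x : ℕ) ∉ W j := (Finset.mem_sdiff.mp x.2).2
      have := congrFun hg ⟨x, hx⟩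
      simpa [hF, hx'] using this
    have := Finset.card_le_card_of_injOn F (fun g _ => hmem g) hinj
    calc 2 ^ (V.card - k j) = Fintype.card (↥(V \ W j) → Bool) := by
          rw [Fintype.card_fun, Fintype.card_coe, Fintype.card_bool,
            Finset.card_sdiff_of_subset (hWV j)]
    _ ≤ (A j).card := by rw [← Finset.card_univ]; exact this
  -- the A j are pairwise disjoint, so their cards sum to at most 2^|V|
  have hsum : ∑ j, (A j).card ≤ 2 ^ V.card := by
    have hdisj : ∀ x ∈ (Finset.univ : Finset (Fin m)), ∀ y ∈ Finset.univ, x ≠ y →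
        Disjoint (A x) (A y) := by
      intro x _ y _ hxy
      refine Finset.disjoint_left.2 fun f hfx hfy => ?_
      simp only [hA, Finset.mem_filter, Finset.mem_univ, true_and] at hfx hfy
      exact hcon x y hxy ⟨ext f, fun i hi => hi.elim (hfx i) (hfy i)⟩
    calc ∑ j, (A j).card = (Finset.univ.biUnion A).card :=
          (Finset.card_biUnion hdisj).symm
    _ ≤ Fintype.card (↥V → Bool) := Finset.card_le_card (Finset.subset_univ _) |>.trans
          (le_of_eq (Finset.card_univ))
    _ = 2 ^ V.card := by rw [Fintype.card_fun, Fintype.card_coe, Fintype.card_bool]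
  -- pass to reals: ∑ exp(-k j * log 2) ≤ 1
  have hpow : ∀ j, (2:ℝ) ^ (V.card - k j) = 2 ^ V.card * Real.exp (-(k j : ℝ) * Real.log 2) := by
    intro j
    have he : Real.exp (-(k j : ℝ) * Real.log 2) = ((2:ℝ) ^ (k j))⁻¹ := by
      rw [neg_mul, Real.exp_neg, Real.exp_nat_mul, Real.exp_log (by norm_num)]
    rw [he, eq_comm, mul_inv_eq_iff_eq_mul₀ (by positivity), ← pow_add,
      Nat.sub_add_cancel (hkV j)]
  have hreal : ∑ j, Real.exp (-(k j : ℝ) * Real.log 2) ≤ 1 := by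
    have h2 : (0:ℝ) < 2 ^ V.card := by positivity
    have hcast : (∑ j, (2:ℝ) ^ (V.card - k j)) ≤ 2 ^ V.card := by
      calc (∑ j, (2:ℝ) ^ (V.card - k j)) ≤ ∑ j, ((A j).card : ℝ) := by
            refine Finset.sum_le_sum fun j _ => ?_
            exact_mod_cast Nat.cast_le.mpr (hcard j)
      _ ≤ 2 ^ V.card := by exact_mod_cast hsum
    rw [← mul_le_mul_iff_right₀ h2, mul_one]
    calc (2:ℝ) ^ V.card * ∑ j, Real.exp (-(k j : ℝ) * Real.log 2)
        = ∑ j, (2:ℝ) ^ (V.card - k j) := by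
          rw [Finset.mul_sum]; exact Finset.sum_congr rfl fun j _ => (hpow j).symm
    _ ≤ 2 ^ V.card := hcast
  -- Jensen for exp
  set S : ℝ := ∑ j, (k j : ℝ) with hS
  have hm' : (0:ℝ) < m := by exact_mod_cast hm
  have hjen := convexOn_exp.map_sum_le (t := Finset.univ)
      (w := fun _ : Fin m => 1 / (m:ℝ)) (p := fun j => -(k j : ℝ) * Real.log 2)
      (fun _ _ => by positivity)
      (by simp [Finset.sum_const, Finset.card_univ]; field_simp)
      (fun _ _ => Set.mem_univ _)
  have hlhs : ∑ j, (1 / (m:ℝ)) • (-(k j : ℝ) * Real.log 2) = -(S / m) * Real.log 2 := by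
    simp only [smul_eq_mul, hS]
    rw [← Finset.mul_sum, ← Finset.sum_mul, Finset.sum_neg_distrib]
    ring
  have hrhs : ∑ j, (1 / (m:ℝ)) • Real.exp (-(k j : ℝ) * Real.log 2) ≤ 1 / m := by
    simp only [smul_eq_mul]
    rw [← Finset.mul_sum]
    calc (1 / (m:ℝ)) * ∑ j, Real.exp (-(k j : ℝ) * Real.log 2)
        ≤ (1 / (m:ℝ)) * 1 := by
          exact mul_le_mul_of_nonneg_left hreal (by positivity)
    _ = 1 / m := mul_one _
  have hexp : Real.exp (-(S / m) * Real.log 2) ≤ 1 / m := by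
    rw [← hlhs]; exact le_trans hjen hrhs
  have hmle : (m:ℝ) ≤ Real.exp ((S / m) * Real.log 2) := by
    rw [neg_mul, Real.exp_neg] at hexp
    have hexpos := Real.exp_pos ((S / m) * Real.log 2)
    rw [inv_le_comm₀ hexpos (by positivity), inv_div] at hexp
    linarith [hexp]
  have hlog : Real.log m ≤ (S / m) * Real.log 2 := by
    calc Real.log m ≤ Real.log (Real.exp ((S / m) * Real.log 2)) :=
          Real.log_le_log hm' hmle
    _ = (S / m) * Real.log 2 := Real.log_exp _
  have hlogb : Real.logb 2 m ≤ S / m := by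
    rw [Real.logb, div_le_iff₀ (Real.log_pos (by norm_num))]
    exact hlog
  have hmain : (m:ℝ) * Real.logb 2 m ≤ S := by
    calc (m:ℝ) * Real.logb 2 m ≤ (m:ℝ) * (S / m) :=
          mul_le_mul_of_nonneg_left hlogb (le_of_lt hm')
    _ = S := by field_simp
  refine hmain.trans ?_
  -- S ≤ N
  have hSN : ∑ j, k j ≤ ∑ i, (ψ i).varCount := by
    calc ∑ j, k j ≤ ∑ j, ∑ i ∈ Finset.univ.filter (fun i => P i = j), (ψ i).varCount := by
          refine Finset.sum_le_sum fun j _ => ?_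
          calc k j ≤ ∑ i ∈ Finset.univ.filter (fun i => P i = j), (ψ i).vars.card :=
                Finset.card_biUnion_le
          _ ≤ _ := Finset.sum_le_sum fun i _ => PropForm.card_vars_le_varCount (ψ i)
    _ = ∑ i, (ψ i).varCount := Finset.sum_fiberwise _ _ _
  calc S = ((∑ j, k j : ℕ) : ℝ) := by rw [hS]; push_cast; ring
  _ ≤ _ := by exact_mod_cast hSN

/-- Merging two jointly satisfiable blocks of a partition. -/
lemma merge_step (n m' : ℕ) (ψ : Fin n → PropForm) (P : Fin n → Fin (m' + 1))
    (hsurj : Function.Surjective P)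
    (hPsat : ∀ j, ∃ θ, ∀ i, P i = j → (ψ i).eval θ = true)
    (j j' : Fin (m' + 1)) (hne : j ≠ j') (θ : ℕ → Bool)
    (hθ : ∀ i, (P i = j ∨ P i = j') → (ψ i).eval θ = true) :
    ∃ P' : Fin n → Fin m', Function.Surjective P' ∧
      ∀ k, ∃ θ₀, ∀ i, P' i = k → (ψ i).eval θ₀ = true := by
  classical
  set e := finSuccEquiv' j' with he
  have hjnone : e j ≠ none := by
    rw [he]
    intro h
    exact hne (e.injective (h.trans (finSuccEquiv'_at j').symm))
  obtain ⟨j₀, hj₀⟩ : ∃ j₀, e j = some j₀ := Option.ne_none_iff_exists'.mp hjnone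
  refine ⟨fun i => (e (P i)).getD j₀, ?_, ?_⟩
  · intro k
    obtain ⟨i, hi⟩ := hsurj (e.symm (some k))
    exact ⟨i, by simp only [hi, Equiv.apply_symm_apply, Option.getD_some]⟩
  · intro k
    by_cases hk : k = j₀
    · subst hk
      refine ⟨θ, fun i hi => ?_⟩
      apply hθ i
      rcases h : e (P i) with _ | l
      · right; exact e.injective (h.trans (finSuccEquiv'_at j').symm)
      · left
        simp only [h, Option.getD_some] at hi
        subst hi
        exact e.injective (h.trans hj₀.symm)
    · obtain ⟨θ₀, hθ₀⟩ := hPsat (e.symm (some k))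
      refine ⟨θ₀, fun i hi => ?_⟩
      apply hθ₀ i
      rcases h : e (P i) with _ | l
      · simp only [h, Option.getD_none] at hi; exact absurd hi.symm hk
      · simp only [h, Option.getD_some] at hi; subst hi
        exact e.eq_symm_apply.mpr h

theorem merge_partition (n : ℕ) (ψ : Fin n → PropForm)
    (hsat : ∀ i, ∃ θ, (ψ i).eval θ = true) :
    ∃ (m : ℕ) (P : Fin n → Fin m),
      Function.Surjective P ∧
      (m : ℝ) * Real.logb 2 m ≤ ((∑ i, (ψ i).varCount : ℕ) : ℝ) ∧
      ∀ j : Fin m, ∃ θ, ∀ i, P i = j → (ψ i).eval θ = true := by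
  classical
  have hex : ∃ m, ∃ P : Fin n → Fin m, Function.Surjective P ∧
      ∀ j, ∃ θ, ∀ i, P i = j → (ψ i).eval θ = true := by
    refine ⟨n, id, Function.surjective_id, fun j => ?_⟩
    obtain ⟨θ, hθ⟩ := hsat j
    exact ⟨θ, fun i hi => by cases hi; exact hθ⟩
  obtain ⟨P, hPsurj, hPsat⟩ := Nat.find_spec hex
  refine ⟨Nat.find hex, P, hPsurj, ?_, hPsat⟩
  apply key_count _ _ ψ P hPsat
  rintro j j' hjj' ⟨θ, hθ⟩
  obtain ⟨m', hm'⟩ : ∃ m', Nat.find hex = m' + 1 :=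
    ⟨Nat.find hex - 1, by have := Fin.pos j; omega⟩
  -- transport along hm'
  set P₂ : Fin n → Fin (m' + 1) := fun i => Fin.cast hm' (P i) with hP₂
  have hcastinj : Function.Injective (Fin.cast hm') := Fin.cast_injective hm'
  have hP₂surj : Function.Surjective P₂ := fun k => by
    obtain ⟨i, hi⟩ := hPsurj (Fin.cast hm'.symm k)
    exact ⟨i, Fin.val_injective (by simp [hP₂, hi])⟩
  have hP₂sat : ∀ k, ∃ θ₀, ∀ i, P₂ i = k → (ψ i).eval θ₀ = true := fun k => by
    obtain ⟨θ₀, hθ₀⟩ := hPsat (Fin.cast hm'.symm k)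
    refine ⟨θ₀, fun i hi => hθ₀ i ?_⟩
    exact Fin.val_injective (by simpa [hP₂, Fin.coe_cast] using congrArg Fin.val hi)
  have hθ₂ : ∀ i, (P₂ i = Fin.cast hm' j ∨ P₂ i = Fin.cast hm' j') →
      (ψ i).eval θ = true := by
    intro i hi
    apply hθ i
    rcases hi with hi | hi
    · exact Or.inl (hcastinj hi)
    · exact Or.inr (hcastinj hi)
  have hne₂ : Fin.cast hm' j ≠ Fin.cast hm' j' := fun h => hjj' (hcastinj h)
  obtain ⟨P', hP'surj, hP'sat⟩ :=
    merge_step n m' ψ P₂ hP₂surj hP₂sat _ _ hne₂ θ hθ₂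
  exact Nat.find_min hex (by omega) ⟨P', hP'surj, hP'sat⟩
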